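/- Fix an integer m ≥ 1 and a real sequence a = (a_k). Define the lower-triangular matrix V = (v_{nk}) by v_{nk} = Σ_{j=k}^{n} a_j B_{jk} for 1 ≤ k ≤ n, where B is the inverse triangle of H^(m). Then a belongs to the β-dual of h_0(Δ^(m)) — i.e. the series Σ_k a_k x_k converges for every x ∈ h_0(Δ^(m)) — if and only if V ∈ (c₀ : c), i.e. for every null sequence y the sequence ((Vy)_n)_n = (Σ_{k=1}^{n} v_{nk} y_k)_n converges. -/

import Mathlib

open Filter Finset Topology

/- Real sequences are modelled as functions `ℕ → ℝ`, where the Lean index `n : ℕ`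
corresponds to the paper's index `n + 1` (the paper indexes sequences by `k ≥ 1`).
Thus the paper's entry `h_{nk} = ∑_{i=k}^{n} (-1)^{i-k} C(m, i-k) / (n+i-1)`
(for `1 ≤ k ≤ n`) becomes, with 0-based indices,
`hMat m n k = ∑_{i ∈ Icc k n} (-1)^{i-k} C(m, i-k) / (n+i+1)`. -/

/-- The entries of the triangle matrix `H^(m) = H Δ^(m)` (0-based indexing). -/
noncomputable def hMat (m n k : ℕ) : ℝ :=
  ∑ i ∈ Finset.Icc k n, (-1 : ℝ) ^ (i - k) * (Nat.choose m (i - k) : ℝ) / ((n + i + 1 : ℕ) : ℝ)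

/-- The `H^(m)`-transform of a sequence: `(H^(m) x)_n = ∑_{k=1}^{n} h_{nk} x_k`. -/
noncomputable def hTrans (m : ℕ) (x : ℕ → ℝ) (n : ℕ) : ℝ :=
  ∑ k ∈ Finset.range (n + 1), hMat m n k * x k

/-- `h_0(Δ^(m))`: sequences whose `H^(m)`-transform tends to `0`. -/
def hZero (m : ℕ) : Set (ℕ → ℝ) := {x | Tendsto (hTrans m x) atTop (𝓝 0)}

/-- `h_c(Δ^(m))`: sequences whose `H^(m)`-transform converges. -/
def hConv (m : ℕ) : Set (ℕ → ℝ) := {x | ∃ L : ℝ, Tendsto (hTrans m x) atTop (𝓝 L)}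

/-- `h_∞(Δ^(m))`: sequences whose `H^(m)`-transform is bounded. -/
def hBdd (m : ℕ) : Set (ℕ → ℝ) := {x | ∃ M : ℝ, ∀ n, |hTrans m x n| ≤ M}

/-- The space `c₀` of null real sequences. -/
def c0Seq : Set (ℕ → ℝ) := {y | Tendsto y atTop (𝓝 0)}

/-- The space `c` of convergent real sequences. -/
def cSeq : Set (ℕ → ℝ) := {y | ∃ L : ℝ, Tendsto y atTop (𝓝 L)}

/-- The space `ℓ∞` of bounded real sequences. -/
def linfSeq : Set (ℕ → ℝ) := {y | ∃ M : ℝ, ∀ n, |y n| ≤ M}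

/-- The sup norm `‖y‖ = sup_n |y_n|` of a sequence. -/
noncomputable def supNorm (y : ℕ → ℝ) : ℝ := ⨆ n, |y n|

/-- The norm `‖x‖ = sup_n |(H^(m) x)_n|` on the Hilbert difference sequence spaces. -/
noncomputable def hNorm (m : ℕ) (x : ℕ → ℝ) : ℝ := supNorm (hTrans m x)

/-- `a` is in the β-dual of `hZero m` iff the matrix `V`, `v_{nk} = ∑_{j=k}^n a_j B_{jk}`,
maps `c0Seq` into the convergent sequences. -/
private lemma sum_swap_tri (n : ℕ) (f : ℕ → ℕ → ℝ) :
    ∑ k ∈ Finset.range (n + 1), ∑ j ∈ Finset.range (k + 1), f k j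
      = ∑ j ∈ Finset.range (n + 1), ∑ k ∈ Finset.Icc j n, f k j := by
  apply Finset.sum_comm'
  intro k j
  simp only [Finset.mem_range, Finset.mem_Icc]
  omega

private lemma key_identity (a : ℕ → ℝ) (B : ℕ → ℕ → ℝ) (y : ℕ → ℝ) (n : ℕ) :
    ∑ k ∈ Finset.range (n + 1), a k * (∑ j ∈ Finset.range (k + 1), B k j * y j)
      = ∑ k ∈ Finset.range (n + 1), (∑ j ∈ Finset.Icc k n, a j * B j k) * y k := by
  have := sum_swap_tri n (fun k j => a k * (B k j * y j))
  rw [Finset.sum_congr rfl (fun k _ => Finset.mul_sum _ _ _), this]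
  refine Finset.sum_congr rfl fun k _ => ?_
  rw [Finset.sum_mul]
  exact Finset.sum_congr rfl fun j _ => by ring

theorem hilbert_diff_betaDual_h0 (m : ℕ) (hm : 1 ≤ m) (a : ℕ → ℝ)
    (B : ℕ → ℕ → ℝ)
    (hBtri : ∀ n k : ℕ, n < k → B n k = 0)
    (hBright : ∀ n k : ℕ, (∑ j ∈ Finset.Icc k n, hMat m n j * B j k) = if n = k then 1 else 0)
    (hBleft : ∀ n k : ℕ, (∑ j ∈ Finset.Icc k n, B n j * hMat m j k) = if n = k then 1 else 0) :
    (∀ x ∈ hZero m, ∃ L : ℝ,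
        Tendsto (fun K => ∑ k ∈ Finset.range K, a k * x k) atTop (𝓝 L)) ↔
    (∀ y ∈ c0Seq, ∃ L : ℝ,
        Tendsto (fun n => ∑ k ∈ Finset.range (n + 1),
          (∑ j ∈ Finset.Icc k n, a j * B j k) * y k) atTop (𝓝 L)) := by
  constructor
  · intro h y hy
    set x : ℕ → ℝ := fun k => ∑ j ∈ Finset.range (k + 1), B k j * y j with hxdef
    have hxy : ∀ n, hTrans m x n = y n := by
      intro n
      unfold hTrans
      have : ∑ k ∈ Finset.range (n + 1), hMat m n k * x k
          = ∑ j ∈ Finset.range (n + 1),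
              (∑ k ∈ Finset.Icc j n, hMat m n k * B k j) * y j := by
        have := sum_swap_tri n (fun k j => hMat m n k * (B k j * y j))
        simp only [hxdef]
        rw [Finset.sum_congr rfl (fun k _ => Finset.mul_sum _ _ _), this]
        refine Finset.sum_congr rfl fun j _ => ?_
        rw [Finset.sum_mul]
        exact Finset.sum_congr rfl fun k _ => by ring
      rw [this]
      have : ∀ j ∈ Finset.range (n + 1),
          (∑ k ∈ Finset.Icc j n, hMat m n k * B k j) * y j
            = (if n = j then 1 else 0) * y j := by
        intro j _
        rw [hBright]
      rw [Finset.sum_congr rfl this]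
      simp
    have hx : x ∈ hZero m := by
      have : hTrans m x = y := funext hxy
      simpa [hZero, c0Seq, this] using hy
    obtain ⟨L, hL⟩ := h x hx
    refine ⟨L, ?_⟩
    have h2 : Tendsto (fun n => ∑ k ∈ Finset.range (n + 1), a k * x k) atTop (𝓝 L) :=
      hL.comp (tendsto_add_atTop_nat 1)
    have h3 : ∀ n, ∑ k ∈ Finset.range (n + 1), a k * x k
        = ∑ k ∈ Finset.range (n + 1), (∑ j ∈ Finset.Icc k n, a j * B j k) * y k :=
      fun n => key_identity a B y n
    exact h2.congr fun n => h3 n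
  · intro h x hx
    set y : ℕ → ℝ := hTrans m x with hydef
    have hy : y ∈ c0Seq := hx
    obtain ⟨L, hL⟩ := h y hy
    refine ⟨L, ?_⟩
    have hxk : ∀ k, x k = ∑ j ∈ Finset.range (k + 1), B k j * y j := by
      intro k
      have : ∑ j ∈ Finset.range (k + 1), B k j * y j
          = ∑ i ∈ Finset.range (k + 1),
              (∑ j ∈ Finset.Icc i k, B k j * hMat m j i) * x i := by
        simp only [hydef]
        unfold hTrans
        have := sum_swap_tri k (fun j i => B k j * (hMat m j i * x i))
        rw [Finset.sum_congr rfl (fun j _ => Finset.mul_sum _ _ _), this]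
        refine Finset.sum_congr rfl fun i _ => ?_
        rw [Finset.sum_mul]
        exact Finset.sum_congr rfl fun j _ => by ring
      rw [this]
      have : ∀ i ∈ Finset.range (k + 1),
          (∑ j ∈ Finset.Icc i k, B k j * hMat m j i) * x i
            = (if k = i then 1 else 0) * x i := by
        intro i _
        rw [hBleft]
      rw [Finset.sum_congr rfl this]
      simp
    have h3 : ∀ n, ∑ k ∈ Finset.range (n + 1), (∑ j ∈ Finset.Icc k n, a j * B j k) * y k
        = ∑ k ∈ Finset.range (n + 1), a k * x k := by
      intro n
      rw [← key_identity a B y n]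
      exact Finset.sum_congr rfl fun k _ => by rw [← hxk k]
    have h2 : Tendsto (fun n => ∑ k ∈ Finset.range (n + 1), a k * x k) atTop (𝓝 L) :=
      hL.congr fun n => h3 n
    exact (tendsto_add_atTop_iff_nat 1).mp h2
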